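/- Gumbel perturbation induces the Plackett–Luce ordering: let 𝒳 be a finite nonempty set with |𝒳| = n, w : 𝒳 → (0,∞), and let (G_x)_{x∈𝒳} be independent standard Gumbel random variables. Then almost surely the values log w(x) + G_x are pairwise distinct, and for every enumeration (x_1,…,x_n) of 𝒳, Pr{log w(x_1) + G_{x_1} > log w(x_2) + G_{x_2} > ⋯ > log w(x_n) + G_{x_n}} = ∏_{i=1}^{n} w(x_i) / (Σ_{j=i}^{n} w(x_j)). -/

import Mathlib

open scoped BigOperators
open MeasureTheory

open Set Filter Real

noncomputable section GumbelAux


/-- density of the shifted Gumbel distribution with weight `c`. -/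
def gDens (c s : ℝ) : ℝ := c * Real.exp (-s) * Real.exp (-(c * Real.exp (-s)))

lemma gDens_nonneg {c : ℝ} (hc : 0 ≤ c) (s : ℝ) : 0 ≤ gDens c s := by
  unfold gDens; positivity

lemma gDens_hasDerivAt (c s : ℝ) :
    HasDerivAt (fun s => Real.exp (-(c * Real.exp (-s)))) (gDens c s) s := by
  have h1 : HasDerivAt (fun s : ℝ => -(c * Real.exp (-s))) (c * Real.exp (-s)) s := by
    have := ((Real.hasDerivAt_exp (-s)).comp s (hasDerivAt_neg s)).const_mul c
    simpa [Function.comp_def] using this.fun_neg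
  have := (Real.hasDerivAt_exp (-(c * Real.exp (-s)))).comp s h1
  simpa [gDens, mul_comm, mul_assoc, mul_left_comm, Function.comp_def] using this

lemma gDens_continuous (c : ℝ) : Continuous (gDens c) := by
  unfold gDens; continuity

lemma gDens_reflected_hasDerivAt (c x : ℝ) :
    HasDerivAt (fun x : ℝ => -Real.exp (-(c * Real.exp x))) (gDens c (-x)) x := by
  have h1 : HasDerivAt (fun x : ℝ => -(c * Real.exp x)) (-(c * Real.exp x)) x := by
    simpa using ((Real.hasDerivAt_exp x).const_mul c).fun_neg
  have := ((Real.hasDerivAt_exp (-(c * Real.exp x))).comp x h1).neg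
  simpa [gDens, mul_comm, mul_assoc, mul_left_comm, Function.comp_def, Pi.neg_def] using this

lemma gDens_integrableOn_Iic {c : ℝ} (hc : 0 < c) (a : ℝ) :
    IntegrableOn (gDens c) (Iic a) := by
  have htd : Tendsto (fun x : ℝ => -Real.exp (-(c * Real.exp x))) atTop (nhds 0) := by
    have h0 : Tendsto (fun x : ℝ => -(c * Real.exp x)) atTop atBot :=
      Filter.tendsto_neg_atBot_iff.mpr (Filter.Tendsto.const_mul_atTop hc Real.tendsto_exp_atTop)
    simpa using (Real.tendsto_exp_atBot.comp h0).neg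
  have hrefl : IntegrableOn (fun x => gDens c (-x)) (Ioi (-a)) :=
    integrableOn_Ioi_deriv_of_nonneg' (fun x _ => gDens_reflected_hasDerivAt c x)
      (fun x _ => gDens_nonneg hc.le _) htd
  have h2 := (MeasurePreserving.integrableOn_comp_preimage
      (Measure.measurePreserving_neg (volume : Measure ℝ))
      (Homeomorph.neg ℝ).measurableEmbedding).2 hrefl
  have h3 : IntegrableOn (gDens c) (Iio a) := by
    have hset : (Neg.neg : ℝ → ℝ) ⁻¹' Ioi (-a) = Iio a := by
      ext x; simp [neg_lt]
    have hfun : ((fun x : ℝ => gDens c (-x)) ∘ Neg.neg) = gDens c := by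
      funext x; simp
    rw [hset, hfun] at h2
    exact h2
  exact (integrableOn_Iic_iff_integrableOn_Iio).2 h3

lemma gDens_integral_Iic {c : ℝ} (hc : 0 < c) (a : ℝ) :
    ∫ s in Iic a, gDens c s = Real.exp (-(c * Real.exp (-a))) := by
  have htd : Tendsto (fun s : ℝ => Real.exp (-(c * Real.exp (-s)))) atBot (nhds 0) := by
    have h1 : Tendsto (fun s : ℝ => -(c * Real.exp (-s))) atBot atBot :=
      Filter.tendsto_neg_atBot_iff.mpr
        (Filter.Tendsto.const_mul_atTop hc (Real.tendsto_exp_atTop.comp Filter.tendsto_neg_atBot_atTop))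
    exact Real.tendsto_exp_atBot.comp h1
  have h := integral_Iic_of_hasDerivAt_of_tendsto'
    (fun x _ => gDens_hasDerivAt c x) (gDens_integrableOn_Iic hc a) htd
  simpa using h

/-- The Gumbel measure with weight `c`: the law of `log c + G` for `G` standard Gumbel. -/
def gumbelW (c : ℝ) : Measure ℝ := (volume : Measure ℝ).withDensity (fun s => ENNReal.ofReal (gDens c s))

lemma gumbelW_Iic {c : ℝ} (hc : 0 < c) (a : ℝ) :
    gumbelW c (Iic a) = ENNReal.ofReal (Real.exp (-(c * Real.exp (-a)))) := by
  rw [gumbelW, withDensity_apply _ measurableSet_Iic,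
    ← ofReal_integral_eq_lintegral_ofReal (gDens_integrableOn_Iic hc a)
      (Filter.Eventually.of_forall fun s => gDens_nonneg hc.le s),
    gDens_integral_Iic hc a]

lemma gumbelW_singleton (c x : ℝ) : gumbelW c {x} = 0 := by
  rw [gumbelW, withDensity_apply _ (measurableSet_singleton x)]
  exact setLIntegral_measure_zero _ _ (measure_singleton x)

instance gumbelW_noAtoms (c : ℝ) : NullSingletonClass (gumbelW c) := ⟨fun x => gumbelW_singleton c x⟩

lemma gumbelW_Iio {c : ℝ} (hc : 0 < c) (a : ℝ) :
    gumbelW c (Iio a) = ENNReal.ofReal (Real.exp (-(c * Real.exp (-a)))) := by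
  rw [measure_congr Iio_ae_eq_Iic, gumbelW_Iic hc]

instance gumbelW_prob (c : ℝ) [hc : Fact (0 < c)] : IsProbabilityMeasure (gumbelW c) := by
  constructor
  have h1 := tendsto_measure_Iic_atTop (gumbelW c)
  have h2 : Filter.Tendsto (fun a => gumbelW c (Iic a)) atTop (nhds 1) := by
    have h3 : Filter.Tendsto (fun a : ℝ => Real.exp (-(c * Real.exp (-a)))) atTop (nhds 1) := by
      have h4 : Filter.Tendsto (fun a : ℝ => -(c * Real.exp (-a))) atTop (nhds 0) := by
        simpa using (((Real.tendsto_exp_atBot.comp Filter.tendsto_neg_atTop_atBot).const_mul c).neg)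
      simpa [Function.comp_def] using (Real.continuous_exp.continuousAt (x := 0)).tendsto.comp h4
    have := (ENNReal.continuous_ofReal.tendsto 1).comp h3
    simpa [Filter.Tendsto, gumbelW_Iic hc.out] using this.congr (fun a => (gumbelW_Iic hc.out a).symm)
  exact tendsto_nhds_unique h1 h2

lemma gumbelW_prob' {c : ℝ} (hc : 0 < c) : IsProbabilityMeasure (gumbelW c) :=
  haveI : Fact (0 < c) := ⟨hc⟩
  gumbelW_prob c



lemma gDens_measurable (c : ℝ) : Measurable (gDens c) := by unfold gDens; fun_prop

lemma gumbelW_withDensity {d b : ℝ} (hd : 0 < d) (hb : 0 ≤ b) :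
    (gumbelW d).withDensity (fun s => ENNReal.ofReal (Real.exp (-(b * Real.exp (-s)))))
      = ENNReal.ofReal (d / (d + b)) • gumbelW (d + b) := by
  have hdb : 0 < d + b := by linarith
  rw [gumbelW, ← withDensity_mul _ (gDens_measurable d).ennreal_ofReal (by fun_prop)]
  have hfun : ((fun s => ENNReal.ofReal (gDens d s)) * fun s => ENNReal.ofReal (Real.exp (-(b * Real.exp (-s)))))
      = (ENNReal.ofReal (d / (d + b))) • (fun s => ENNReal.ofReal (gDens (d + b) s)) := by
    funext s
    have h1 : (0:ℝ) ≤ gDens d s := by unfold gDens; positivity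
    have h2 : (0:ℝ) ≤ d / (d + b) := by positivity
    simp only [Pi.mul_apply, Pi.smul_apply, smul_eq_mul, ← ENNReal.ofReal_mul h1,
      ← ENNReal.ofReal_mul h2]
    congr 1
    unfold gDens
    have key : Real.exp (-(d * Real.exp (-s))) * Real.exp (-(b * Real.exp (-s)))
        = Real.exp (-((d + b) * Real.exp (-s))) := by
      rw [← Real.exp_add]; ring_nf
    rw [mul_assoc, key]
    field_simp
  rw [hfun, withDensity_smul _ ((gDens_measurable (d+b)).ennreal_ofReal)]
  rfl

lemma lintegral_gumbelW_factor_Iio {d b : ℝ} (hd : 0 < d) (hb : 0 ≤ b) (s : ℝ) :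
    ∫⁻ a in Iio s, ENNReal.ofReal (Real.exp (-(b * Real.exp (-a)))) ∂(gumbelW d)
      = ENNReal.ofReal (d / (d + b)) * ENNReal.ofReal (Real.exp (-((d + b) * Real.exp (-s)))) := by
  have h := gumbelW_withDensity hd hb
  have h2 : ((gumbelW d).withDensity (fun s => ENNReal.ofReal (Real.exp (-(b * Real.exp (-s)))))) (Iio s)
      = ∫⁻ a in Iio s, ENNReal.ofReal (Real.exp (-(b * Real.exp (-a)))) ∂(gumbelW d) :=
    withDensity_apply _ measurableSet_Iio
  rw [← h2, h, Measure.smul_apply, gumbelW_Iio (by linarith)]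
  rfl

lemma lintegral_gumbelW_factor_univ {d b : ℝ} (hd : 0 < d) (hb : 0 ≤ b) :
    ∫⁻ a, ENNReal.ofReal (Real.exp (-(b * Real.exp (-a)))) ∂(gumbelW d)
      = ENNReal.ofReal (d / (d + b)) := by
  have h := gumbelW_withDensity hd hb
  have h2 : ((gumbelW d).withDensity (fun s => ENNReal.ofReal (Real.exp (-(b * Real.exp (-s)))))) univ
      = ∫⁻ a, ENNReal.ofReal (Real.exp (-(b * Real.exp (-a)))) ∂(gumbelW d) := by
    rw [withDensity_apply _ MeasurableSet.univ, Measure.restrict_univ]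
  haveI := gumbelW_prob' (by linarith : (0:ℝ) < d + b)
  rw [← h2, h, Measure.smul_apply, measure_univ]
  simp


def ordSet (n : ℕ) : Set (Fin n → ℝ) := {t | ∀ i j : Fin n, i < j → t j < t i}

lemma measurableSet_ordSet (n : ℕ) : MeasurableSet (ordSet n) := by
  have h : ordSet n = ⋂ (i : Fin n) (j : Fin n) (_ : i < j), {t : Fin n → ℝ | t j < t i} := by
    ext t; simp [ordSet]
  rw [h]
  exact MeasurableSet.iInter fun i => MeasurableSet.iInter fun j => MeasurableSet.iInter
    fun _ => measurableSet_lt (measurable_pi_apply j) (measurable_pi_apply i)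

lemma mem_ordSet_insertNth_last {n : ℕ} (a : ℝ) (u : Fin (n + 1) → ℝ) :
    (Fin.insertNth (Fin.last (n + 1)) a u ∈ ordSet (n + 2)) ↔
      (u ∈ ordSet (n + 1) ∧ a < u (Fin.last n)) := by
  have hval : ∀ j : Fin (n + 1),
      Fin.insertNth (α := fun _ => ℝ) (Fin.last (n + 1)) a u j.castSucc = u j := by
    intro j
    have := Fin.insertNth_apply_succAbove (α := fun _ : Fin (n + 2) => ℝ) (Fin.last (n + 1)) a u j
    rwa [Fin.succAbove_last] at this
  constructor
  · intro h
    refine ⟨fun i j hij => ?_, ?_⟩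
    · have := h i.castSucc j.castSucc (Fin.castSucc_lt_castSucc_iff.mpr hij)
      rwa [hval, hval] at this
    · have := h (Fin.castSucc (Fin.last n)) (Fin.last (n + 1)) (Fin.castSucc_lt_last _)
      rwa [hval, Fin.insertNth_apply_same] at this
  · rintro ⟨hu, ha⟩ i j hij
    rcases Fin.eq_castSucc_or_eq_last j with ⟨j', rfl⟩ | rfl
    · obtain ⟨i', rfl⟩ : ∃ i' : Fin (n + 1), i'.castSucc = i := by
        have : i ≠ Fin.last (n + 1) := by
          intro hE; rw [hE] at hij; exact absurd hij (by simpa using (Fin.le_last j'.castSucc).not_gt)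
        exact Fin.exists_castSucc_eq.mpr this
      rw [hval, hval]
      exact hu i' j' (Fin.castSucc_lt_castSucc_iff.mp hij)
    · obtain ⟨i', rfl⟩ : ∃ i' : Fin (n + 1), i'.castSucc = i := by
        exact Fin.exists_castSucc_eq.mpr (Fin.ne_last_of_lt hij)
      rw [hval, Fin.insertNth_apply_same]
      rcases eq_or_lt_of_le (Fin.le_last i') with hE | hlt
      · rw [hE]; exact ha
      · exact ha.trans (hu i' (Fin.last n) hlt)

lemma sum_Ici_castSucc {n : ℕ} (c : Fin (n + 2) → ℝ) (i : Fin (n + 1)) :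
    ∑ j ∈ Finset.Ici i.castSucc, c j
      = (∑ j ∈ Finset.Ici i, c j.castSucc) + c (Fin.last (n + 1)) := by
  have h1 : ∀ (m : ℕ) (k : Fin m) (f : Fin m → ℝ),
      ∑ j ∈ Finset.Ici k, f j = ∑ j : Fin m, if k ≤ j then f j else 0 := by
    intro m k f
    rw [← Finset.sum_filter]
    congr 1
    ext j; simp
  rw [h1, h1, Fin.sum_univ_castSucc]
  simp [Fin.castSucc_le_castSucc_iff, Fin.le_last]

lemma sum_Ici_last {n : ℕ} (c : Fin (n + 1) → ℝ) :
    ∑ j ∈ Finset.Ici (Fin.last n), c j = c (Fin.last n) := by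
  have : Finset.Ici (Fin.last n) = {Fin.last n} := by
    ext j; simp [Fin.last_le_iff]
  rw [this, Finset.sum_singleton]

lemma key_lemma : ∀ (n : ℕ) (c : Fin (n + 1) → ℝ), (∀ i, 0 < c i) → ∀ (b : ℝ), 0 ≤ b →
    ∫⁻ t in ordSet (n + 1),
        ENNReal.ofReal (Real.exp (-(b * Real.exp (-(t (Fin.last n))))))
        ∂(Measure.pi fun i => gumbelW (c i))
      = ENNReal.ofReal (∏ i, c i / (b + ∑ j ∈ Finset.Ici i, c j)) := by
  intro n
  induction n with
  | zero =>
    intro c hc b hb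
    have huniv : ordSet 1 = univ := by
      ext t; simp only [ordSet, mem_setOf_eq, mem_univ, iff_true]
      intro i j hij
      exact absurd (Subsingleton.elim i j) hij.ne
    haveI : ∀ i : Fin 1, SigmaFinite (gumbelW (c i)) := fun i =>
      haveI := gumbelW_prob' (hc i); inferInstance
    rw [huniv, Measure.restrict_univ]
    have MP := measurePreserving_piUnique (fun _ : Fin 1 => gumbelW (c 0))
    have hmeasf : Measurable (fun x : ℝ => ENNReal.ofReal (Real.exp (-(b * Real.exp (-x))))) := by
      fun_prop
    have hc' : (fun i : Fin 1 => gumbelW (c i)) = fun _ : Fin 1 => gumbelW (c 0) := by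
      funext i; congr 1; exact congrArg c (Subsingleton.elim i 0)
    rw [hc']
    have := MP.lintegral_comp hmeasf
    have heq : (fun t : Fin 1 → ℝ => ENNReal.ofReal (Real.exp (-(b * Real.exp (-(t (Fin.last 0)))))))
        = fun t => ENNReal.ofReal (Real.exp (-(b * Real.exp (-((MeasurableEquiv.piUnique (fun _ : Fin 1 => ℝ)) t))))) := by
      funext t
      congr 1
    rw [heq]
    rw [this]
    rw [lintegral_gumbelW_factor_univ (hc 0) hb]
    congr 1
    have hsum : ∑ j ∈ Finset.Ici (0 : Fin (0 + 1)), c j = c 0 := by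
      rw [show (Finset.Ici (0 : Fin (0 + 1))) = {0} from by decide]
      exact Finset.sum_singleton _ _
    rw [Fin.prod_univ_one, hsum, add_comm b (c 0)]
  | succ n IH =>
    intro c hc b hb
    set d := c (Fin.last (n + 1)) with hd
    have hdpos : 0 < d := hc _
    have hdb : (0:ℝ) ≤ d + b := by linarith
    haveI : ∀ i : Fin (n + 2), SigmaFinite (gumbelW (c i)) := fun i =>
      haveI := gumbelW_prob' (hc i); inferInstance
    haveI : ∀ j : Fin (n + 1), SigmaFinite (gumbelW (c j.castSucc)) := fun j =>
      haveI := gumbelW_prob' (hc j.castSucc); inferInstance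
    haveI : SigmaFinite (gumbelW d) := haveI := gumbelW_prob' hdpos; inferInstance
    set E := MeasurableEquiv.piFinSuccAbove (fun _ : Fin (n + 2) => ℝ) (Fin.last (n + 1)) with hE
    have hmeq : (fun j : Fin (n + 1) => gumbelW (c ((Fin.last (n + 1)).succAbove j)))
        = fun j => gumbelW (c j.castSucc) := by
      funext j; rw [Fin.succAbove_last]
    have MP : MeasurePreserving E (Measure.pi fun i => gumbelW (c i))
        ((gumbelW d).prod (Measure.pi fun j => gumbelW (c j.castSucc))) := by
      have h0 := measurePreserving_piFinSuccAbove (fun i => gumbelW (c i)) (Fin.last (n + 1))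
      rwa [hmeq] at h0
    set f : ℝ → ENNReal := fun x => ENNReal.ofReal (Real.exp (-(b * Real.exp (-x)))) with hf
    have hmf : Measurable f := by rw [hf]; fun_prop
    set F : (Fin (n + 2) → ℝ) → ENNReal :=
      (ordSet (n + 2)).indicator (fun t => f (t (Fin.last (n + 1)))) with hF
    have hmF : Measurable F :=
      (hmf.comp (measurable_pi_apply _)).indicator (measurableSet_ordSet _)
    have step1 : ∫⁻ t in ordSet (n + 2), f (t (Fin.last (n + 1)))
          ∂(Measure.pi fun i => gumbelW (c i))
        = ∫⁻ p, F (E.symm p) ∂((gumbelW d).prod (Measure.pi fun j => gumbelW (c j.castSucc))) := by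
      rw [← lintegral_indicator (measurableSet_ordSet _), ← hF]
      have h1 := MP.lintegral_comp (f := fun p => F (E.symm p)) (hmF.comp E.symm.measurable)
      rw [← h1]
      congr 1; funext t; exact (congrArg F (E.symm_apply_apply t)).symm
    have hsymm : ∀ (a : ℝ) (u : Fin (n + 1) → ℝ),
        E.symm (a, u) = Fin.insertNth (α := fun _ => ℝ) (Fin.last (n + 1)) a u := by
      intro a u
      rw [hE, MeasurableEquiv.piFinSuccAbove_symm_apply]
      rfl
    have inner : ∀ u : Fin (n + 1) → ℝ,
        ∫⁻ a, F (E.symm (a, u)) ∂(gumbelW d)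
          = (ordSet (n + 1)).indicator (fun u => ENNReal.ofReal (d / (d + b)) *
              ENNReal.ofReal (Real.exp (-((d + b) * Real.exp (-(u (Fin.last n))))))) u := by
      intro u
      by_cases hu : u ∈ ordSet (n + 1)
      · have hpt : ∀ a : ℝ, F (E.symm (a, u)) = (Iio (u (Fin.last n))).indicator f a := by
          intro a
          rw [hsymm a u, hF]
          by_cases hA : a < u (Fin.last n)
          · rw [Set.indicator_of_mem ((mem_ordSet_insertNth_last a u).mpr ⟨hu, hA⟩),
              Set.indicator_of_mem (by exact hA : a ∈ Iio (u (Fin.last n))),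
              Fin.insertNth_apply_same]
          · rw [Set.indicator_of_notMem (fun hmem =>
                hA ((mem_ordSet_insertNth_last a u).mp hmem).2),
              Set.indicator_of_notMem (by exact hA : a ∉ Iio (u (Fin.last n)))]
        rw [lintegral_congr hpt, lintegral_indicator measurableSet_Iio,
          lintegral_gumbelW_factor_Iio hdpos hb, Set.indicator_of_mem hu]
      · have hpt : ∀ a : ℝ, F (E.symm (a, u)) = 0 := by
          intro a
          rw [hsymm a u, hF, Set.indicator_of_notMem]
          intro hmem
          exact hu ((mem_ordSet_insertNth_last a u).mp hmem).1
        rw [lintegral_congr hpt, lintegral_zero, Set.indicator_of_notMem hu]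
    rw [step1, lintegral_prod_symm (fun p => F (E.symm p)) ((hmF.comp E.symm.measurable)).aemeasurable]
    rw [lintegral_congr inner, lintegral_indicator (measurableSet_ordSet _)]
    rw [lintegral_const_mul _ (by fun_prop : Measurable fun u : Fin (n + 1) → ℝ =>
      ENNReal.ofReal (Real.exp (-((d + b) * Real.exp (-(u (Fin.last n)))))))]
    rw [IH (fun j => c j.castSucc) (fun j => hc _) (d + b) hdb]
    rw [← ENNReal.ofReal_mul (div_nonneg hdpos.le (by linarith))]
    congr 1
    have hterm : ∀ i : Fin (n + 1),
        c i.castSucc / (b + ∑ j ∈ Finset.Ici i.castSucc, c j)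
          = c i.castSucc / ((d + b) + ∑ j ∈ Finset.Ici i, c j.castSucc) := by
      intro i
      rw [sum_Ici_castSucc, ← hd]
      ring_nf
    have hr : (∏ i : Fin (n + 2), c i / (b + ∑ j ∈ Finset.Ici i, c j))
        = (∏ i : Fin (n + 1), c i.castSucc / ((d + b) + ∑ j ∈ Finset.Ici i, c j.castSucc))
          * (d / (b + d)) := by
      rw [Fin.prod_univ_castSucc, sum_Ici_last, ← hd]
      congr 1
      exact Finset.prod_congr rfl (fun i _ => hterm i)
    rw [hr]
    ring


lemma pi_gumbelW_ordSet (n : ℕ) (c : Fin n → ℝ) (hc : ∀ i, 0 < c i) :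
    (Measure.pi fun i => gumbelW (c i)) (ordSet n)
      = ENNReal.ofReal (∏ i, c i / ∑ j ∈ Finset.Ici i, c j) := by
  haveI : ∀ i, SigmaFinite (gumbelW (c i)) := fun i =>
    haveI := gumbelW_prob' (hc i); inferInstance
  cases n with
  | zero =>
    have h : ordSet 0 = univ := by
      ext t; simp only [ordSet, mem_setOf_eq, mem_univ, iff_true]
      intro i
      exact i.elim0
    rw [h, Measure.pi_univ]
    simp
  | succ n =>
    have h := key_lemma n c hc 0 le_rfl
    simp only [zero_mul, neg_zero, Real.exp_zero, ENNReal.ofReal_one, setLIntegral_one,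
      zero_add] at h
    exact h

lemma pi_gumbelW_pair_null {n : ℕ} (c : Fin (n + 1) → ℝ) (hc : ∀ i, 0 < c i)
    {i j : Fin (n + 1)} (hij : i ≠ j) :
    (Measure.pi fun k => gumbelW (c k)) {t | t i = t j} = 0 := by
  haveI : ∀ k, SigmaFinite (gumbelW (c k)) := fun k =>
    haveI := gumbelW_prob' (hc k); inferInstance
  haveI : ∀ k : Fin n, SigmaFinite (gumbelW (c (i.succAbove k))) := fun k =>
    haveI := gumbelW_prob' (hc _); inferInstance
  obtain ⟨k, hk⟩ := Fin.exists_succAbove_eq hij.symm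
  set E := MeasurableEquiv.piFinSuccAbove (fun _ : Fin (n + 1) => ℝ) i with hE
  have MP := measurePreserving_piFinSuccAbove (fun k => gumbelW (c k)) i
  set B : Set (ℝ × (Fin n → ℝ)) := {p | p.1 = p.2 k} with hB
  have hBm : MeasurableSet B :=
    measurableSet_eq_fun measurable_fst ((measurable_pi_apply k).comp measurable_snd)
  have hpre : {t : Fin (n + 1) → ℝ | t i = t j} = E ⁻¹' B := by
    ext t
    have hEt : E t = (t i, fun m => t (i.succAbove m)) := by
      rw [hE]; rfl
    simp only [mem_preimage, hEt, hB, mem_setOf_eq, ← hk]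
  rw [hpre, MP.measure_preimage hBm.nullMeasurableSet]
  rw [Measure.prod_apply_symm hBm]
  have : ∀ u : Fin n → ℝ, gumbelW (c i) ((fun a => (a, u)) ⁻¹' B) = 0 := by
    intro u
    have : ((fun a => (a, u)) ⁻¹' B) = {u k} := by
      ext a; simp [hB]
    rw [this, gumbelW_singleton]
  simp [this]

lemma pi_gumbelW_noninj_null {n : ℕ} (c : Fin n → ℝ) (hc : ∀ i, 0 < c i) :
    (Measure.pi fun k => gumbelW (c k)) {t | ¬ Function.Injective t} = 0 := by
  cases n with
  | zero =>
    have h : {t : Fin 0 → ℝ | ¬ Function.Injective t} = ∅ := by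
      ext t
      simp only [mem_setOf_eq, mem_empty_iff_false, iff_false, not_not]
      intro a b _; exact a.elim0
    simp [h]
  | succ n =>
    have hsub : {t : Fin (n + 1) → ℝ | ¬ Function.Injective t}
        ⊆ ⋃ (i : Fin (n + 1)) (j : Fin (n + 1)) (_ : i ≠ j), {t | t i = t j} := by
      intro t ht
      simp only [Function.Injective, not_forall] at ht
      obtain ⟨i, j, hEq, hne⟩ := ht
      exact mem_iUnion.mpr ⟨i, mem_iUnion.mpr ⟨j, mem_iUnion.mpr ⟨hne, hEq⟩⟩⟩
    refine measure_mono_null hsub ?_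
    refine measure_iUnion_null fun i => measure_iUnion_null fun j => measure_iUnion_null fun hij =>
      pi_gumbelW_pair_null c hc hij


end GumbelAux

/-- A standard Gumbel random variable: a measurable real-valued random variable with
cumulative distribution function `t ↦ exp(−exp(−t))`. -/
def IsStdGumbel {Ω : Type*} [MeasurableSpace Ω] (μ : Measure Ω) (g : Ω → ℝ) : Prop :=
  Measurable g ∧ ∀ t : ℝ, (μ {ω | g ω ≤ t}).toReal = Real.exp (-Real.exp (-t))

noncomputable section GumbelAux2

lemma map_log_add_gumbel {Ω : Type*} [MeasurableSpace Ω] (μ : Measure Ω)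
    [IsProbabilityMeasure μ] {w : ℝ} (hw : 0 < w) {g : Ω → ℝ} (hg : IsStdGumbel μ g) :
    Measure.map (fun ω => Real.log w + g ω) μ = gumbelW w := by
  have hmeas : Measurable (fun ω => Real.log w + g ω) := measurable_const.add hg.1
  haveI : IsProbabilityMeasure (Measure.map (fun ω => Real.log w + g ω) μ) :=
    Measure.isProbabilityMeasure_map hmeas.aemeasurable
  refine Measure.ext_of_Iic _ _ (fun a => ?_)
  rw [Measure.map_apply hmeas measurableSet_Iic, gumbelW_Iic hw]
  have hset : (fun ω => Real.log w + g ω) ⁻¹' Iic a = {ω | g ω ≤ a - Real.log w} := by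
    ext ω; simp [mem_Iic, le_sub_iff_add_le']
  rw [hset]
  have h1 := hg.2 (a - Real.log w)
  have h2 : Real.exp (-(a - Real.log w)) = w * Real.exp (-a) := by
    rw [neg_sub, Real.exp_sub, Real.exp_log hw, Real.exp_neg]
    field_simp
  have h3 : μ {ω | g ω ≤ a - Real.log w} =
      ENNReal.ofReal ((μ {ω | g ω ≤ a - Real.log w}).toReal) :=
    (ENNReal.ofReal_toReal (measure_ne_top _ _)).symm
  rw [h3, h1, h2]

lemma map_joint {X Ω : Type*} [Fintype X] [MeasurableSpace Ω] (μ : Measure Ω)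
    [IsProbabilityMeasure μ] (w : X → ℝ) (hw : ∀ x, 0 < w x) (G : X → Ω → ℝ)
    (hG : ∀ x, IsStdGumbel μ (G x))
    (hindep : ProbabilityTheory.iIndepFun G μ)
    {n : ℕ} (y : Fin n → X) (hy : Function.Bijective y) :
    Measure.map (fun ω i => Real.log (w (y i)) + G (y i) ω) μ
      = Measure.pi (fun i => gumbelW (w (y i))) := by
  have hFmeas : ∀ x, Measurable (fun ω => Real.log (w x) + G x ω) :=
    fun x => measurable_const.add (hG x).1
  have hT : Measurable (fun ω (i : Fin n) => Real.log (w (y i)) + G (y i) ω) :=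
    measurable_pi_lambda _ (fun i => hFmeas (y i))
  haveI : ∀ i : Fin n, SigmaFinite (gumbelW (w (y i))) := fun i =>
    haveI := gumbelW_prob' (hw (y i)); inferInstance
  have hiF : ProbabilityTheory.iIndepFun
      (fun x ω => Real.log (w x) + G x ω) μ := by
    have h := hindep.comp (fun x t => Real.log (w x) + t)
      (fun x => measurable_const.add measurable_id)
    exact h
  set e : Fin n ≃ X := Equiv.ofBijective y hy with he
  symm
  apply Measure.pi_eq
  intro s hs
  rw [Measure.map_apply hT (MeasurableSet.univ_pi hs)]
  set s' : X → Set ℝ := fun x => s (e.symm x) with hs'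
  have hsymm : ∀ i : Fin n, e.symm (y i) = i := fun i => e.symm_apply_apply i
  have hpre : (fun ω (i : Fin n) => Real.log (w (y i)) + G (y i) ω) ⁻¹' (univ.pi s)
      = ⋂ x ∈ Finset.univ, (fun ω => Real.log (w x) + G x ω) ⁻¹' (s' x) := by
    ext ω
    simp only [mem_preimage, Set.mem_pi, mem_univ, forall_true_left, Finset.mem_univ,
      Set.mem_iInter, hs', true_implies, iInter_true]
    constructor
    · intro h x
      have := h (e.symm x)
      rwa [show y (e.symm x) = x from e.apply_symm_apply x] at this
    · intro h i
      have := h (y i)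
      rwa [hsymm i] at this
  rw [hpre]
  rw [hiF.measure_inter_preimage_eq_mul Finset.univ (fun x _ => hs (e.symm x))]
  have hmap : ∀ x : X, μ ((fun ω => Real.log (w x) + G x ω) ⁻¹' (s' x))
      = gumbelW (w x) (s' x) := by
    intro x
    rw [← Measure.map_apply (hFmeas x) (hs (e.symm x)), map_log_add_gumbel μ (hw x) (hG x)]
  calc ∏ x : X, μ ((fun ω => Real.log (w x) + G x ω) ⁻¹' (s' x))
      = ∏ x : X, gumbelW (w x) (s' x) := Finset.prod_congr rfl fun x _ => hmap x
    _ = ∏ i : Fin n, gumbelW (w (y i)) (s i) := by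
        refine (Fintype.prod_bijective y hy _ _ (fun i => ?_)).symm
        simp only [hs', hsymm i]

end GumbelAux2

/-- **Gumbel perturbation induces the Plackett–Luce ordering:** almost surely the values
`log w(x) + G_x` are pairwise distinct, and for every enumeration `(x_1, …, x_n)` of `𝒳`
the probability that `log w(x_1) + G_{x_1} > ⋯ > log w(x_n) + G_{x_n}` equals
`∏ᵢ w(x_i) / (Σ_{j ≥ i} w(x_j))`. -/
theorem gumbel_plackett_luce {X Ω : Type*} [Fintype X] [Nonempty X]
    [MeasurableSpace Ω] (μ : Measure Ω) [IsProbabilityMeasure μ]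
    (w : X → ℝ) (hw : ∀ x, 0 < w x)
    (G : X → Ω → ℝ)
    (hG : ∀ x, IsStdGumbel μ (G x))
    (hindep : ProbabilityTheory.iIndepFun
      G μ) :
    μ {ω | Function.Injective fun x => Real.log (w x) + G x ω} = 1 ∧
    ∀ y : Fin (Fintype.card X) → X, Function.Bijective y →
      (μ {ω | ∀ i j : Fin (Fintype.card X), i < j →
          Real.log (w (y j)) + G (y j) ω < Real.log (w (y i)) + G (y i) ω}).toReal
        = ∏ i : Fin (Fintype.card X), w (y i) / ∑ j ∈ Finset.Ici i, w (y j) := by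
  classical
  constructor
  · set e := Fintype.equivFin X with he
    set y : Fin (Fintype.card X) → X := ⇑e.symm with hy'
    have hy : Function.Bijective y := e.symm.bijective
    have hmapeq := map_joint μ w hw G hG hindep y hy
    set T := fun ω (i : Fin (Fintype.card X)) => Real.log (w (y i)) + G (y i) ω with hT
    have hTmeas : Measurable T :=
      measurable_pi_lambda _ fun i => measurable_const.add (hG (y i)).1
    have hNIeq : {t : Fin (Fintype.card X) → ℝ | ¬ Function.Injective t}
        = ⋃ (i) (j) (_ : i ≠ j), {t : Fin (Fintype.card X) → ℝ | t i = t j} := by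
      ext t
      simp only [mem_setOf_eq, Function.Injective, not_forall, mem_iUnion, exists_prop]
      constructor
      · rintro ⟨a, b, hab, hne⟩
        exact ⟨a, b, hne, hab⟩
      · rintro ⟨a, b, hne, hab⟩
        exact ⟨a, b, hab, hne⟩
    have hNImeas : MeasurableSet {t : Fin (Fintype.card X) → ℝ | ¬ Function.Injective t} := by
      rw [hNIeq]
      exact MeasurableSet.iUnion fun i => MeasurableSet.iUnion fun j =>
        MeasurableSet.iUnion fun _ =>
          measurableSet_eq_fun (measurable_pi_apply i) (measurable_pi_apply j)
    have hΩ : {ω | Function.Injective fun x => Real.log (w x) + G x ω}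
        = (T ⁻¹' {t | ¬ Function.Injective t})ᶜ := by
      ext ω
      simp only [mem_setOf_eq, mem_compl_iff, mem_preimage, not_not]
      have hcomp : (fun x => Real.log (w x) + G x ω) = (T ω) ∘ e := by
        funext x
        simp only [hT, Function.comp_apply, hy', Equiv.symm_apply_apply]
      rw [hcomp]
      exact e.injective_comp (T ω)
    rw [hΩ, prob_compl_eq_one_iff (hTmeas hNImeas)]
    rw [← Measure.map_apply hTmeas hNImeas, hmapeq]
    exact pi_gumbelW_noninj_null _ (fun i => hw (y i))
  · intro y hy
    have hmapeq := map_joint μ w hw G hG hindep y hy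
    have hTmeas : Measurable (fun ω (i : Fin (Fintype.card X)) =>
        Real.log (w (y i)) + G (y i) ω) :=
      measurable_pi_lambda _ fun i => measurable_const.add (hG (y i)).1
    have hpre : {ω | ∀ i j : Fin (Fintype.card X), i < j →
          Real.log (w (y j)) + G (y j) ω < Real.log (w (y i)) + G (y i) ω}
        = (fun ω (i : Fin (Fintype.card X)) => Real.log (w (y i)) + G (y i) ω) ⁻¹'
            ordSet (Fintype.card X) := rfl
    rw [hpre, ← Measure.map_apply hTmeas (measurableSet_ordSet _), hmapeq,
      pi_gumbelW_ordSet _ _ (fun i => hw (y i))]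
    rw [ENNReal.toReal_ofReal]
    exact Finset.prod_nonneg fun i _ => div_nonneg (hw _).le
      (Finset.sum_nonneg fun j _ => (hw _).le)
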